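/- (Theorem 4.4) Let γ : ℝ → ℝ⁴ be smooth and let U₁, U₂, U₃, U₄ : ℝ → ℝ⁴ be smooth maps forming, at every σ, a linearly independent family, with continuous functions 𝒦̄₁, 𝒦̄₂, 𝒦̄₃ : ℝ → ℝ, such that γ' = U₁ and the timelike equiform Frenet equations hold: U₁' = 𝒦̄₁U₁ + U₂, U₂' = U₁ + 𝒦̄₁U₂ + 𝒦̄₂U₃, U₃' = -𝒦̄₂U₂ + 𝒦̄₁U₃ + 𝒦̄₃U₄, U₄' = -𝒦̄₃U₃ + 𝒦̄₁U₄. Assume 𝒦̄₁(σ) ≠ 0 for all σ. Then 𝒦̄₂ ≡ 0 if and only if γ lies fully in a 2-dimensional plane of E₁⁴, i.e. there exists a 2-dimensional linear subspace W ⊆ ℝ⁴ such that γ(σ) - γ(0) ∈ W for all σ. -/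

import Mathlib

noncomputable section

/-- The Minkowski bilinear form on ℝ⁴ with signature (-,+,+,+). -/
def B (x y : Fin 4 → ℝ) : ℝ :=
  -(x 0 * y 0) + x 1 * y 1 + x 2 * y 2 + x 3 * y 3

open Set

/-- Grönwall: a function with derivative bounded linearly in its norm, vanishing at 0,
vanishes on `[0, ∞)`. -/
lemma zero_of_deriv_bound_nonneg {F : Type*} [NormedAddCommGroup F] [NormedSpace ℝ F]
    (f f' : ℝ → F) (C : ℝ → ℝ) (hC : Continuous C)
    (hd : ∀ t, HasDerivAt f (f' t) t)
    (hb : ∀ t, ‖f' t‖ ≤ C t * ‖f t‖)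
    (h0 : f 0 = 0) : ∀ t, 0 ≤ t → f t = 0 := by
  intro a ha
  obtain ⟨M, hM⟩ :=
    (isCompact_Icc (a := (0:ℝ)) (b := a)).exists_bound_of_continuousOn hC.continuousOn
  set M' := max M 0 with hM'
  have key := norm_le_gronwallBound_of_norm_deriv_right_le (δ := 0) (K := M') (ε := 0)
    (f := f) (f' := f') (a := 0) (b := a)
    (fun x _ => (hd x).continuousAt.continuousWithinAt)
    (fun x _ => (hd x).hasDerivWithinAt)
    (by simp [h0])
    (fun x hx => by
      have h1 : ‖f' x‖ ≤ C x * ‖f x‖ := hb x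
      have h2 : C x ≤ M' := by
        have := hM x ⟨hx.1, hx.2.le⟩
        have : |C x| ≤ M := by simpa [Real.norm_eq_abs] using this
        exact le_trans (le_trans (le_abs_self _) this) (le_max_left _ _)
      nlinarith [norm_nonneg (f x), norm_nonneg (f' x)])
  have h := key a ⟨ha, le_refl a⟩
  rw [gronwallBound_ε0_δ0] at h
  exact norm_le_zero_iff.mp h

lemma zero_of_deriv_bound {F : Type*} [NormedAddCommGroup F] [NormedSpace ℝ F]
    (f f' : ℝ → F) (C : ℝ → ℝ) (hC : Continuous C)
    (hd : ∀ t, HasDerivAt f (f' t) t)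
    (hb : ∀ t, ‖f' t‖ ≤ C t * ‖f t‖)
    (h0 : f 0 = 0) : ∀ t, f t = 0 := by
  intro t
  rcases le_or_gt 0 t with h | h
  · exact zero_of_deriv_bound_nonneg f f' C hC hd hb h0 t h
  · have hd' : ∀ s, HasDerivAt (fun s => f (-s)) ((-1 : ℝ) • f' (-s)) s := by
      intro s
      exact (hd (-s)).scomp s (hasDerivAt_neg s)
    have hb' : ∀ s, ‖(-1 : ℝ) • f' (-s)‖ ≤ |C (-s)| * ‖f (-(s : ℝ))‖ := by
      intro s
      have := hb (-s)
      have h2 : C (-s) * ‖f (-s)‖ ≤ |C (-s)| * ‖f (-s)‖ :=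
        mul_le_mul_of_nonneg_right (le_abs_self _) (norm_nonneg _)
      calc ‖(-1 : ℝ) • f' (-s)‖ = ‖f' (-s)‖ := by simp [norm_smul]
        _ ≤ |C (-s)| * ‖f (-s)‖ := le_trans this h2
    have := zero_of_deriv_bound_nonneg (fun s => f (-s)) (fun s => (-1 : ℝ) • f' (-s))
      (fun s => |C (-s)|) ((hC.comp continuous_neg).abs) hd' hb' (by simpa using h0)
      (-t) (by linarith)
    simpa using this

theorem timelike_K₂_zero_iff_planar
    (γ U₁ U₂ U₃ U₄ : ℝ → Fin 4 → ℝ) (K₁ K₂ K₃ : ℝ → ℝ)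
    (hγ : ContDiff ℝ (⊤ : ℕ∞) γ)
    (hU₁ : ContDiff ℝ (⊤ : ℕ∞) U₁) (hU₂ : ContDiff ℝ (⊤ : ℕ∞) U₂)
    (hU₃ : ContDiff ℝ (⊤ : ℕ∞) U₃) (hU₄ : ContDiff ℝ (⊤ : ℕ∞) U₄)
    (hindep : ∀ σ, LinearIndependent ℝ ![U₁ σ, U₂ σ, U₃ σ, U₄ σ])
    (hK₁c : Continuous K₁) (hK₂c : Continuous K₂) (hK₃c : Continuous K₃)
    (hγ' : ∀ σ, deriv γ σ = U₁ σ)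
    (hU₁' : ∀ σ, deriv U₁ σ = K₁ σ • U₁ σ + U₂ σ)
    (hU₂' : ∀ σ, deriv U₂ σ = U₁ σ + K₁ σ • U₂ σ + K₂ σ • U₃ σ)
    (hU₃' : ∀ σ, deriv U₃ σ = -(K₂ σ • U₂ σ) + K₁ σ • U₃ σ + K₃ σ • U₄ σ)
    (hU₄' : ∀ σ, deriv U₄ σ = -(K₃ σ • U₃ σ) + K₁ σ • U₄ σ)
    (hK₁ne : ∀ σ, K₁ σ ≠ 0) :
    (∀ σ, K₂ σ = 0) ↔
      ∃ W : Submodule ℝ (Fin 4 → ℝ), Module.finrank ℝ W = 2 ∧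
        ∀ σ, γ σ - γ 0 ∈ W := by
  have dγ : Differentiable ℝ γ := hγ.differentiable (by norm_num)
  have dU₁ : Differentiable ℝ U₁ := hU₁.differentiable (by norm_num)
  have dU₂ : Differentiable ℝ U₂ := hU₂.differentiable (by norm_num)
  constructor
  · -- K₂ ≡ 0 ⟹ planar
    intro hK₂
    set W : Submodule ℝ (Fin 4 → ℝ) := Submodule.span ℝ (Set.range ![U₁ 0, U₂ 0]) with hW
    obtain ⟨W', hW'⟩ := W.exists_isCompl
    set Q : (Fin 4 → ℝ) →ₗ[ℝ] (Fin 4 → ℝ) :=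
      W'.subtype.comp (Submodule.projectionOnto W' W hW'.symm) with hQ
    have hkerQ : LinearMap.ker Q = W := by
      rw [hQ, LinearMap.ker_comp, Submodule.ker_subtype, Submodule.comap_bot,
        Submodule.ker_projectionOnto]
    set Qc : (Fin 4 → ℝ) →L[ℝ] (Fin 4 → ℝ) := LinearMap.toContinuousLinearMap Q with hQc
    have hQcQ : ∀ x, Qc x = Q x := fun x => rfl
    have hQU₁0 : Q (U₁ 0) = 0 := by
      rw [← LinearMap.mem_ker, hkerQ]
      exact Submodule.subset_span ⟨0, rfl⟩
    have hQU₂0 : Q (U₂ 0) = 0 := by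
      rw [← LinearMap.mem_ker, hkerQ]
      exact Submodule.subset_span ⟨1, rfl⟩
    -- Grönwall on the pair (Q ∘ U₁, Q ∘ U₂)
    set f : ℝ → (Fin 4 → ℝ) × (Fin 4 → ℝ) := fun σ => (Qc (U₁ σ), Qc (U₂ σ)) with hf
    set f' : ℝ → (Fin 4 → ℝ) × (Fin 4 → ℝ) :=
      fun σ => (K₁ σ • Qc (U₁ σ) + Qc (U₂ σ), Qc (U₁ σ) + K₁ σ • Qc (U₂ σ)) with hf'
    have hd : ∀ σ, HasDerivAt f (f' σ) σ := by
      intro σ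
      have h1 : HasDerivAt (fun σ => Qc (U₁ σ)) (Qc (deriv U₁ σ)) σ :=
        Qc.hasFDerivAt.comp_hasDerivAt σ (dU₁ σ).hasDerivAt
      have h2 : HasDerivAt (fun σ => Qc (U₂ σ)) (Qc (deriv U₂ σ)) σ :=
        Qc.hasFDerivAt.comp_hasDerivAt σ (dU₂ σ).hasDerivAt
      rw [hU₁'] at h1
      rw [hU₂', hK₂ σ] at h2
      simp only [map_add, map_smul, zero_smul, add_zero] at h1 h2
      exact h1.prodMk h2
    have hb : ∀ σ, ‖f' σ‖ ≤ (|K₁ σ| + 1) * ‖f σ‖ := by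
      intro σ
      set x := Qc (U₁ σ)
      set y := Qc (U₂ σ)
      have hx : ‖K₁ σ • x + y‖ ≤ |K₁ σ| * ‖x‖ + ‖y‖ := by
        refine (norm_add_le _ _).trans ?_
        rw [norm_smul, Real.norm_eq_abs]
      have hy : ‖x + K₁ σ • y‖ ≤ ‖x‖ + |K₁ σ| * ‖y‖ := by
        refine (norm_add_le _ _).trans ?_
        rw [norm_smul, Real.norm_eq_abs]
      have hfn : ‖f σ‖ = max ‖x‖ ‖y‖ := rfl
      have hf'n : ‖f' σ‖ = max ‖K₁ σ • x + y‖ ‖x + K₁ σ • y‖ := rfl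
      rw [hf'n, hfn]
      have hxm : ‖x‖ ≤ max ‖x‖ ‖y‖ := le_max_left _ _
      have hym : ‖y‖ ≤ max ‖x‖ ‖y‖ := le_max_right _ _
      have habs : (0:ℝ) ≤ |K₁ σ| := abs_nonneg _
      refine max_le ?_ ?_ <;> nlinarith
    have hzero := zero_of_deriv_bound f f' (fun σ => |K₁ σ| + 1)
      ((hK₁c.abs).add continuous_const) hd hb
      (by simp [hf, hQcQ, hQU₁0, hQU₂0, Prod.ext_iff])
    have hQU₁ : ∀ σ, Qc (U₁ σ) = 0 := fun σ => congrArg Prod.fst (hzero σ)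
    -- Then γ σ - γ 0 ∈ W
    refine ⟨W, ?_, ?_⟩
    · have h2 : LinearIndependent ℝ ![U₁ 0, U₂ 0] := by
        have hcomp : (![U₁ 0, U₂ 0, U₃ 0, U₄ 0]) ∘ (![0, 1] : Fin 2 → Fin 4) = ![U₁ 0, U₂ 0] := by
          funext i; fin_cases i <;> rfl
        have := (hindep 0).comp (![0, 1] : Fin 2 → Fin 4) (by decide)
        rwa [hcomp] at this
      rw [hW, finrank_span_eq_card h2]
      simp
    · intro σ
      have hg : ∀ σ, HasDerivAt (fun σ => Qc (γ σ)) (Qc (U₁ σ)) σ := by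
        intro σ
        have := Qc.hasFDerivAt.comp_hasDerivAt σ (dγ σ).hasDerivAt
        rwa [hγ'] at this
      have hconst : Qc (γ σ) = Qc (γ 0) := by
        apply is_const_of_deriv_eq_zero (f := fun σ => Qc (γ σ))
        · exact fun t => ((hg t).differentiableAt)
        · intro t
          rw [(hg t).deriv, hQU₁]
      rw [← hkerQ, LinearMap.mem_ker]
      have : Q (γ σ) - Q (γ 0) = 0 := by
        rw [← hQcQ, ← hQcQ, hconst, sub_self]
      rw [map_sub]
      exact this
  · -- planar ⟹ K₂ ≡ 0
    rintro ⟨W, hrank, hmem⟩ σ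
    obtain ⟨W', hW'⟩ := W.exists_isCompl
    set Q : (Fin 4 → ℝ) →ₗ[ℝ] (Fin 4 → ℝ) :=
      W'.subtype.comp (Submodule.projectionOnto W' W hW'.symm) with hQ
    have hkerQ : LinearMap.ker Q = W := by
      rw [hQ, LinearMap.ker_comp, Submodule.ker_subtype, Submodule.comap_bot,
        Submodule.ker_projectionOnto]
    set Qc : (Fin 4 → ℝ) →L[ℝ] (Fin 4 → ℝ) := LinearMap.toContinuousLinearMap Q with hQc
    have hQcQ : ∀ x, Qc x = Q x := fun x => rfl
    have hQγ : ∀ t, Qc (γ t) = Qc (γ 0) := by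
      intro t
      have h0 : Q (γ t - γ 0) = 0 := by
        rw [← LinearMap.mem_ker, hkerQ]; exact hmem t
      rw [map_sub] at h0
      rw [hQcQ, hQcQ]
      exact sub_eq_zero.mp h0
    have hQU₁ : ∀ t, Qc (U₁ t) = 0 := by
      intro t
      have hg : HasDerivAt (fun s => Qc (γ s)) (Qc (U₁ t)) t := by
        have := Qc.hasFDerivAt.comp_hasDerivAt t (dγ t).hasDerivAt
        rwa [hγ'] at this
      have hzero : deriv (fun s => Qc (γ s)) t = 0 := by
        rw [funext hQγ]; simp
      rw [← hg.deriv]; exact hzero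
    have hQU₂ : ∀ t, Qc (U₂ t) = 0 := by
      intro t
      have hg : HasDerivAt (fun s => Qc (U₁ s)) (Qc (deriv U₁ t)) t :=
        Qc.hasFDerivAt.comp_hasDerivAt t (dU₁ t).hasDerivAt
      have hzero : deriv (fun s => Qc (U₁ s)) t = 0 := by
        rw [funext hQU₁]; simp
      have h0 : Qc (deriv U₁ t) = 0 := by rw [← hg.deriv]; exact hzero
      rw [hU₁', map_add, map_smul, hQU₁ t, smul_zero, zero_add] at h0
      exact h0
    have hQU₃ : K₂ σ • Qc (U₃ σ) = 0 := by
      have hg : HasDerivAt (fun s => Qc (U₂ s)) (Qc (deriv U₂ σ)) σ :=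
        Qc.hasFDerivAt.comp_hasDerivAt σ (dU₂ σ).hasDerivAt
      have hzero : deriv (fun s => Qc (U₂ s)) σ = 0 := by
        rw [funext hQU₂]; simp
      have h0 : Qc (deriv U₂ σ) = 0 := by rw [← hg.deriv]; exact hzero
      rw [hU₂', map_add, map_add, map_smul, map_smul, hQU₁ σ, hQU₂ σ, smul_zero,
        add_zero, zero_add] at h0
      exact h0
    by_contra hne
    have hU₃W : Qc (U₃ σ) = 0 := by
      rcases smul_eq_zero.mp hQU₃ with h | h
      · exact absurd h hne
      · exact h
    have hmemW : ∀ i : Fin 3, (![U₁ σ, U₂ σ, U₃ σ]) i ∈ W := by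
      intro i
      fin_cases i <;>
        · rw [← hkerQ, LinearMap.mem_ker, ← hQcQ]
          first
            | exact hQU₁ σ
            | exact hQU₂ σ
            | exact hU₃W
    have h3 : LinearIndependent ℝ ![U₁ σ, U₂ σ, U₃ σ] := by
      have hcomp : (![U₁ σ, U₂ σ, U₃ σ, U₄ σ]) ∘ (![0, 1, 2] : Fin 3 → Fin 4) =
          ![U₁ σ, U₂ σ, U₃ σ] := by
        funext i; fin_cases i <;> rfl
      have := (hindep σ).comp (![0, 1, 2] : Fin 3 → Fin 4) (by decide)
      rwa [hcomp] at this
    have hspan : Submodule.span ℝ (Set.range ![U₁ σ, U₂ σ, U₃ σ]) ≤ W := by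
      rw [Submodule.span_le]
      rintro x ⟨i, rfl⟩
      exact hmemW i
    have hfr : Module.finrank ℝ (Submodule.span ℝ (Set.range ![U₁ σ, U₂ σ, U₃ σ])) = 3 := by
      rw [finrank_span_eq_card h3]; simp
    have := Submodule.finrank_mono hspan
    rw [hfr, hrank] at this
    omega
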